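/- Let β > 0, c > 0, K > 0, let α ∈ (c/β, ∞) satisfy K + (c/β)·ln(αβ/c) + c/β − α = 0, and set ξ* := (1/β)·ln(αβ/c). Then for every x < 0, inf { K + cξ + α·e^{−β(x+ξ)} : ξ > 0 and x + ξ ≥ 0 } = α − c·x, and the infimum is attained at ξ = ξ* − x. -/

import Mathlib

/-- Extension of the minimal cost function to a negative initial surplus `x < 0`:
the infimum of `K + cξ + α exp(−β(x+ξ))` over injections `ξ > 0` restoring a
non-negative surplus equals `α − cx` and is attained at `ξ = ξ* − x`. -/
theorem stmt_10 (β c K α : ℝ) (hβ : 0 < β) (hc : 0 < c) (hK : 0 < K)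
    (hα : α ∈ Set.Ioi (c / β))
    (heq : K + (c / β) * Real.log (α * β / c) + c / β - α = 0)
    (ξstar : ℝ) (hξ : ξstar = (1 / β) * Real.log (α * β / c)) :
    ∀ x < (0 : ℝ),
      IsLeast {y | ∃ ξ, 0 < ξ ∧ 0 ≤ x + ξ ∧ y = K + c * ξ + α * Real.exp (-β * (x + ξ))}
        (α - c * x) ∧
      K + c * (ξstar - x) + α * Real.exp (-β * (x + (ξstar - x))) = α - c * x := by
  have hα' : c / β < α := hα
  have hαpos : 0 < α := lt_trans (div_pos hc hβ) hα'
  have hcab : c < α * β := (div_lt_iff₀ hβ).mp hα'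
  have hr : (1 : ℝ) < α * β / c := by
    rw [lt_div_iff₀ hc]; linarith
  have hrpos : 0 < α * β / c := lt_trans one_pos hr
  have hlogpos : 0 < Real.log (α * β / c) := Real.log_pos hr
  have hξpos : 0 < ξstar := by
    rw [hξ]; positivity
  have hexp : Real.exp (-β * ξstar) = c / (α * β) := by
    have hlg : Real.log (c / (α * β)) = - Real.log (α * β / c) := by
      rw [← Real.log_inv]
      congr 1
      field_simp
    have : -β * ξstar = Real.log (c / (α * β)) := by
      rw [hξ, hlg]; field_simp
    rw [this, Real.exp_log (by positivity)]
  have hcξ : c * ξstar = (c / β) * Real.log (α * β / c) := by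
    rw [hξ]; field_simp
  intro x hx
  have hval : K + c * (ξstar - x) + α * Real.exp (-β * (x + (ξstar - x))) = α - c * x := by
    have hx' : x + (ξstar - x) = ξstar := by ring
    rw [hx', hexp]
    have hαβ : α * (c / (α * β)) = c / β := by
      field_simp
    rw [hαβ]
    nlinarith [heq, hcξ]
  constructor
  · constructor
    · exact ⟨ξstar - x, by linarith, by linarith, hval.symm⟩
    · rintro y ⟨ξ, hξ0, hxξ, rfl⟩
      set t := x + ξ with ht
      -- key: c*t + α*exp(-β t) ≥ c*ξstar + c/β
      have htan : Real.exp (-β * t) ≥ Real.exp (-β * ξstar) * (1 + (-β * t + β * ξstar)) := by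
        have h1 : -β * t = -β * ξstar + (-β * t + β * ξstar) := by ring
        rw [h1, Real.exp_add]
        have := Real.add_one_le_exp (-β * t + β * ξstar)
        have hpos := Real.exp_pos (-β * ξstar)
        nlinarith
      rw [hexp] at htan
      have hkey : c * t + α * Real.exp (-β * t) ≥ c * ξstar + c / β := by
        have hαe : α * Real.exp (-β * t) ≥ α * (c / (α * β) * (1 + (-β * t + β * ξstar))) :=
          mul_le_mul_of_nonneg_left htan (le_of_lt hαpos)
        have h2 : α * (c / (α * β) * (1 + (-β * t + β * ξstar)))
            = c / β - c * t + c * ξstar := by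
          field_simp; ring
        nlinarith
      nlinarith [heq, hcξ]
  · exact hval
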